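/- The Nichols braided Lie algebra 𝔏(V) of the quantum linear space equals the linear span of the nonzero pure powers of the generators: 𝔏(V) = span_F{ x_i^{a} : 1 ≤ i ≤ n, 1 ≤ a ≤ N_i − 1 }. -/

import Mathlib

/-- An `F`-subspace `L` of a `G`-graded algebra `A` is *bracket-closed* (w.r.t. the
bicharacter `χ`) if it is spanned by its homogeneous elements and is closed under the
braided bracket `[u,v] = vu − p_{vu}·uv` of homogeneous elements, where
`p_{uv} = χ (deg u) (deg v)`. -/
def IsBracketClosed {F A : Type*} (G : Type*) [Field F] [AddCommGroup G]
    [Ring A] [Algebra F A]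
    (𝒜 : G → Submodule F A) (χ : G → G → Fˣ) (L : Submodule F A) : Prop :=
  L = Submodule.span F {a : A | a ∈ L ∧ ∃ g : G, a ∈ 𝒜 g} ∧
    ∀ (g h : G), ∀ u ∈ 𝒜 g, ∀ v ∈ 𝒜 h,
      u ∈ L → v ∈ L → v * u - (χ h g : F) • (u * v) ∈ L

/-- For a quantum linear space, the Nichols braided Lie algebra `𝔏(V)` (the smallest
bracket-closed subspace of the Nichols algebra containing the generators) is exactly the
span of the nonzero pure powers `x_i^a`, `1 ≤ a ≤ N_i − 1`, of the generators. -/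
theorem stmt_14 (F : Type*) [Field F] [CharZero F]
    (n : ℕ) (hn : 1 ≤ n)
    (N : Fin n → ℕ) (hN : ∀ i, 2 ≤ N i)
    (q : Fin n → Fin n → Fˣ)
    (hqinv : ∀ i j, i ≠ j → q i j * q j i = 1)
    (hprim : ∀ i, IsPrimitiveRoot (q i i : F) (N i))
    (A : Type*) [Ring A] [Algebra F A]
    (x : Fin n → A)
    (hrel : ∀ i j, i ≠ j → x i * x j = (q i j : F) • (x j * x i))
    (hnil : ∀ i, x i ^ N i = 0)
    (hindep : LinearIndependent F (fun a : (∀ i, Fin (N i)) =>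
        (List.ofFn fun i => x i ^ ((a i : ℕ))).prod))
    (hspan : Submodule.span F (Set.range (fun a : (∀ i, Fin (N i)) =>
        (List.ofFn fun i => x i ^ ((a i : ℕ))).prod)) = ⊤)
    (𝒜 : (Fin n → ℤ) → Submodule F A) [GradedAlgebra 𝒜]
    (hxdeg : ∀ i, x i ∈ 𝒜 (Pi.single i 1))
    (χ : (Fin n → ℤ) → (Fin n → ℤ) → Fˣ)
    (hχ1 : ∀ g h k : Fin n → ℤ, χ (g + h) k = χ g k * χ h k)
    (hχ2 : ∀ g h k : Fin n → ℤ, χ g (h + k) = χ g h * χ g k)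
    (hχq : ∀ i j, χ (Pi.single i 1) (Pi.single j 1) = q i j)
    (L : Submodule F A)
    (hL : IsBracketClosed (Fin n → ℤ) 𝒜 χ L)
    (hxL : ∀ i, x i ∈ L)
    (hmin : ∀ L' : Submodule F A, IsBracketClosed (Fin n → ℤ) 𝒜 χ L' →
      (∀ i, x i ∈ L') → L ≤ L') :
    L = Submodule.span F
      {a : A | ∃ i : Fin n, ∃ k : ℕ, 1 ≤ k ∧ k ≤ N i - 1 ∧ a = x i ^ k} := by
  classical
  set T : Set A := {a : A | ∃ i : Fin n, ∃ k : ℕ, 1 ≤ k ∧ k ≤ N i - 1 ∧ a = x i ^ k}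
    with hT
  set S : Submodule F A := Submodule.span F T with hS
  -- homogeneity of powers
  have hpow : ∀ (i : Fin n) (k : ℕ), x i ^ k ∈ 𝒜 (k • Pi.single i 1) := fun i k =>
    SetLike.pow_mem_graded k (hxdeg i)
  -- bicharacter on multiples of the generators' degrees
  have hχl : ∀ (k : ℕ) (g h : Fin n → ℤ), χ (k • g) h = χ g h ^ k := by
    intro k g h
    induction k with
    | zero =>
      have h0 : χ ((0 : Fin n → ℤ)) h = χ 0 h * χ 0 h := by
        conv_lhs => rw [show (0 : Fin n → ℤ) = 0 + 0 by simp]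
        exact hχ1 0 0 h
      have := right_eq_mul.mp h0
      simpa using this
    | succ m ih => rw [succ_nsmul, hχ1, ih, pow_succ]
  have hχr : ∀ (k : ℕ) (g h : Fin n → ℤ), χ g (k • h) = χ g h ^ k := by
    intro k g h
    induction k with
    | zero =>
      have h0 : χ g ((0 : Fin n → ℤ)) = χ g 0 * χ g 0 := by
        conv_lhs => rw [show (0 : Fin n → ℤ) = 0 + 0 by simp]
        exact hχ2 g 0 0
      have := right_eq_mul.mp h0
      simpa using this
    | succ m ih => rw [succ_nsmul, hχ2, ih, pow_succ]
  -- commutation of powers for distinct generators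
  have hcomm1 : ∀ i j, i ≠ j → ∀ m : ℕ,
      x i * x j ^ m = ((q i j : F) ^ m) • (x j ^ m * x i) := by
    intro i j hij m
    induction m with
    | zero => simp
    | succ m ih =>
      rw [pow_succ, ← mul_assoc, ih, smul_mul_assoc, mul_assoc, hrel i j hij,
        mul_smul_comm, smul_smul, pow_succ, ← mul_assoc]
  have hcomm : ∀ i j, i ≠ j → ∀ k m : ℕ,
      x i ^ k * x j ^ m = ((q i j : F) ^ (k * m)) • (x j ^ m * x i ^ k) := by
    intro i j hij k m
    induction k with
    | zero => simp
    | succ k ih =>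
      rw [pow_succ, mul_assoc, hcomm1 i j hij m, mul_smul_comm, ← mul_assoc, ih,
        smul_mul_assoc, smul_smul, mul_assoc, ← pow_add,
        show m + k * m = (k + 1) * m by ring]
  -- graded projection as a linear map
  have proj : ∀ g : Fin n → ℤ, ∃ π : A →ₗ[F] A,
      (∀ a, a ∈ 𝒜 g → π a = a) ∧ (∀ g' a, a ∈ 𝒜 g' → g' ≠ g → π a = 0) := by
    intro g
    refine ⟨{ toFun := fun a => ((DirectSum.decompose 𝒜 a) g : A)
              map_add' := by
                intro a b
                dsimp only
                rw [DirectSum.decompose_add, DirectSum.add_apply]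
                rfl
              map_smul' := by
                intro r a
                dsimp only
                rw [DirectSum.decompose_smul]
                rfl }, ?_, ?_⟩
    · intro a ha
      exact DirectSum.decompose_of_mem_same 𝒜 ha
    · intro g' a ha hne
      show ((DirectSum.decompose 𝒜 a) g : A) = 0
      rw [DirectSum.decompose_of_mem_ne 𝒜 ha hne]
  -- homogeneous elements of S lie in the span of the generators of that degree
  have hSproj : ∀ g : Fin n → ℤ, ∀ u ∈ S, u ∈ 𝒜 g →
      u ∈ Submodule.span F {a : A | ∃ i : Fin n, ∃ k : ℕ, 1 ≤ k ∧ k ≤ N i - 1 ∧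
        a = x i ^ k ∧ (k • Pi.single i 1 : Fin n → ℤ) = g} := by
    intro g u huS hug
    obtain ⟨π, hπ1, hπ2⟩ := proj g
    have hmap : (Submodule.span F T).map π ≤ Submodule.span F
        {a : A | ∃ i : Fin n, ∃ k : ℕ, 1 ≤ k ∧ k ≤ N i - 1 ∧
          a = x i ^ k ∧ (k • Pi.single i 1 : Fin n → ℤ) = g} := by
      rw [Submodule.map_span]
      refine Submodule.span_le.mpr ?_
      rintro b ⟨a, ⟨i, k, hk1, hk2, rfl⟩, rfl⟩
      by_cases hdeg : (k • Pi.single i 1 : Fin n → ℤ) = g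
      · rw [hπ1 _ (hdeg ▸ hpow i k)]
        exact Submodule.subset_span ⟨i, k, hk1, hk2, rfl, hdeg⟩
      · rw [hπ2 _ _ (hpow i k) hdeg]
        exact zero_mem _
    have hu' : π u = u := hπ1 u hug
    rw [← hu']
    exact hmap (Submodule.mem_map_of_mem (hS ▸ huS))
  -- S is closed under the braided bracket
  have hbr : ∀ (g h : Fin n → ℤ), ∀ u ∈ 𝒜 g, ∀ v ∈ 𝒜 h, u ∈ S → v ∈ S →
      v * u - (χ h g : F) • (u * v) ∈ S := by
    intro g h u hug v hvh huS hvS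
    have hu' := hSproj g u huS hug
    have hv' := hSproj h v hvS hvh
    clear huS hvS hug hvh
    induction hu' using Submodule.span_induction generalizing v with
    | mem a ha =>
      induction hv' using Submodule.span_induction with
      | mem b hb =>
        obtain ⟨i, k, hk1, hk2, rfl, hdg⟩ := ha
        obtain ⟨j, m, hm1, hm2, rfl, hdh⟩ := hb
        subst hdg hdh
        have hcval : (χ (m • Pi.single j 1) (k • Pi.single i 1) : F)
            = (q j i : F) ^ (k * m) := by
          rw [hχl, hχr, hχq, Units.val_pow_eq_pow_val, Units.val_pow_eq_pow_val,
            ← pow_mul]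
        rw [hcval]
        by_cases hij : i = j
        · subst hij
          rw [← pow_add, ← pow_add, add_comm m k,
            show (x i ^ (k + m) - (q i i : F) ^ (k * m) • x i ^ (k + m))
              = (1 - (q i i : F) ^ (k * m)) • x i ^ (k + m) by
                rw [sub_smul, one_smul]]
          by_cases hbig : k + m ≤ N i - 1
          · exact Submodule.smul_mem _ _
              (Submodule.subset_span ⟨i, k + m, by omega, hbig, rfl⟩)
          · have hz : x i ^ (k + m) = 0 := by
              rw [show k + m = N i + (k + m - N i) by have := hN i; omega,
                pow_add, hnil i, zero_mul]
            rw [hz, smul_zero]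
            exact zero_mem _
        · have hij' : ¬ (j = i) := fun e => hij e.symm
          rw [hcomm i j (fun e => hij e) k m, smul_smul]
          have hone : (q j i : F) ^ (k * m) * (q i j : F) ^ (k * m) = 1 := by
            rw [← mul_pow]
            have h1 : (q j i : F) * (q i j : F) = 1 := by
              have := congrArg (Units.val) (hqinv j i hij')
              simpa using this
            rw [h1, one_pow]
          rw [hone, one_smul, sub_self]
          exact zero_mem _
      | zero => simpa using zero_mem S
      | add v1 v2 hv1 hv2 h1 h2 =>
        have hadd := add_mem h1 h2
        have heq : (v1 + v2) * a - (χ h g : F) • (a * (v1 + v2))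
            = (v1 * a - (χ h g : F) • (a * v1)) + (v2 * a - (χ h g : F) • (a * v2)) := by
          rw [add_mul, mul_add, smul_add]; abel
        rw [heq]; exact hadd
      | smul r v1 hv1 h1 =>
        have heq : (r • v1) * a - (χ h g : F) • (a * (r • v1))
            = r • (v1 * a - (χ h g : F) • (a * v1)) := by
          rw [smul_mul_assoc, mul_smul_comm, smul_sub, smul_comm r ((χ h g : F))]
        rw [heq]; exact Submodule.smul_mem _ _ h1
    | zero =>
      simpa using zero_mem S
    | add u1 u2 hu1 hu2 h1 h2 =>
      have hadd := add_mem (h1 v hv') (h2 v hv')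
      have heq : v * (u1 + u2) - (χ h g : F) • ((u1 + u2) * v)
          = (v * u1 - (χ h g : F) • (u1 * v)) + (v * u2 - (χ h g : F) • (u2 * v)) := by
        rw [mul_add, add_mul, smul_add]; abel
      rw [heq]; exact hadd
    | smul r u1 hu1 h1 =>
      have heq : v * (r • u1) - (χ h g : F) • ((r • u1) * v)
          = r • (v * u1 - (χ h g : F) • (u1 * v)) := by
        rw [mul_smul_comm, smul_mul_assoc, smul_sub, smul_comm r ((χ h g : F))]
      rw [heq]; exact Submodule.smul_mem _ _ (h1 v hv')
  -- S is bracket-closed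
  have hSBC : IsBracketClosed (Fin n → ℤ) 𝒜 χ S := by
    constructor
    · refine le_antisymm ?_ ?_
      · rw [hS]
        refine Submodule.span_le.mpr ?_
        rintro a ⟨i, k, hk1, hk2, rfl⟩
        exact Submodule.subset_span
          ⟨Submodule.subset_span ⟨i, k, hk1, hk2, rfl⟩, ⟨k • Pi.single i 1, hpow i k⟩⟩
      · refine Submodule.span_le.mpr ?_
        rintro a ⟨ha, -⟩
        exact ha
    · exact hbr
  -- the generators lie in S
  have hxS : ∀ i, x i ∈ S := by
    intro i
    refine Submodule.subset_span ⟨i, 1, le_refl 1, ?_, (pow_one (x i)).symm⟩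
    have := hN i; omega
  -- all pure powers lie in L
  have hTL : ∀ (i : Fin n) (k : ℕ), 1 ≤ k → k ≤ N i - 1 → x i ^ k ∈ L := by
    intro i k
    induction k with
    | zero => intro h1 _; omega
    | succ m ih =>
      intro _ h2
      by_cases hm : m = 0
      · subst hm; simpa using hxL i
      · have hmL : x i ^ m ∈ L := ih (by omega) (by have := hN i; omega)
        have hbrk := hL.2 (m • Pi.single i 1) (Pi.single i 1) (x i ^ m) (hpow i m)
          (x i) (by simpa using hxdeg i) hmL (hxL i)
        have hc : (χ (Pi.single i 1) (m • Pi.single i 1) : F) = (q i i : F) ^ m := by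
          rw [hχr, hχq, Units.val_pow_eq_pow_val]
        rw [hc, ← pow_succ', ← pow_succ,
          show (x i ^ (m + 1) - (q i i : F) ^ m • x i ^ (m + 1))
            = (1 - (q i i : F) ^ m) • x i ^ (m + 1) by rw [sub_smul, one_smul]] at hbrk
        have hne : (q i i : F) ^ m ≠ 1 :=
          (hprim i).pow_ne_one_of_pos_of_lt (by omega) (by have := hN i; omega)
        have h10 : (1 - (q i i : F) ^ m) ≠ 0 := sub_ne_zero.mpr (Ne.symm hne)
        have := Submodule.smul_mem L (1 - (q i i : F) ^ m)⁻¹ hbrk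
        rwa [smul_smul, inv_mul_cancel₀ h10, one_smul] at this
  have hSL : S ≤ L := by
    rw [hS]
    refine Submodule.span_le.mpr ?_
    rintro a ⟨i, k, hk1, hk2, rfl⟩
    exact hTL i k hk1 hk2
  exact le_antisymm (hmin S hSBC hxS) hSL
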